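/- arXiv:0803.3122 — 2 statements merged into one kernel-verified Lean document; each statement's English description precedes it below -/
import Mathlib

section
/- Let X and Y be metric measure spaces with Borel probability measures, and let H be a real Hilbert space. For any measurable map f : X × Y → H with V_2(f) < ∞, one has V_2(f)² ≤ ∫_X V_2(f^x)² dμ_X(x) + ∫_Y V_2(f^y)² dμ_Y(y), where V_2(g)² = ∬ ‖g(w)−g(w')‖² d(μ⊗μ)(w,w'), f^x(y) = f(x,y), and f^y(x) = f(x,y). -/
open MeasureTheory
open scoped ENNReal

section ObsL2VarHelpers

variable {X Y H : Type*} [MeasurableSpace X] [MeasurableSpace Y]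
  [NormedAddCommGroup H]

/-- Squared-norm quadrilateral inequality in a real inner product space. -/
lemma obsL2Var_quadIneqH [InnerProductSpace ℝ H] (a b c d : H) :
    ‖a - c‖^2 + ‖d - b‖^2 ≤ ‖a - b‖^2 + ‖b - c‖^2 + ‖c - d‖^2 + ‖d - a‖^2 := by
  have h0 : (0:ℝ) ≤ ‖(b - c) + (d - a)‖^2 := sq_nonneg _
  rw [norm_add_sq_real] at h0
  simp only [norm_sub_sq_real, inner_sub_left, inner_sub_right, real_inner_comm a b,
    real_inner_comm a c, real_inner_comm a d, real_inner_comm b c, real_inner_comm b d,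
    real_inner_comm c d] at *
  linarith

lemma obsL2Var_triIneqH (a c d : H) : ‖a - d‖^2 ≤ 2*‖a - c‖^2 + 2*‖c - d‖^2 := by
  have h := norm_sub_le_norm_sub_add_norm_sub a c d
  nlinarith [norm_nonneg (a - c), norm_nonneg (c - d), norm_nonneg (a - d),
    sq_nonneg (‖a - c‖ - ‖c - d‖)]

noncomputable def eE (g : X × Y → H) (w w' : X × Y) : ℝ≥0∞ :=
  ENNReal.ofReal (‖g w - g w'‖ ^ 2)

lemma eE_symm (g : X × Y → H) (w w' : X × Y) : eE g w w' = eE g w' w := by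
  simp [eE, norm_sub_rev]

lemma eE_tri (g : X × Y → H) (w c w' : X × Y) :
    eE g w w' ≤ 2 * eE g w c + 2 * eE g c w' := by
  calc eE g w w' ≤ ENNReal.ofReal (2*‖g w - g c‖^2 + 2*‖g c - g w'‖^2) :=
        ENNReal.ofReal_le_ofReal (obsL2Var_triIneqH _ _ _)
    _ = 2 * eE g w c + 2 * eE g c w' := by
        rw [ENNReal.ofReal_add (by positivity) (by positivity),
          ENNReal.ofReal_mul (by norm_num), ENNReal.ofReal_mul (by norm_num)]
        norm_num [eE]

lemma eE_quad [InnerProductSpace ℝ H] (g : X × Y → H) (a b c d : X × Y) :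
    eE g a c + eE g d b ≤ eE g a b + (eE g b c + (eE g c d + eE g d a)) := by
  calc eE g a c + eE g d b
      = ENNReal.ofReal (‖g a - g c‖^2 + ‖g d - g b‖^2) := by
        rw [ENNReal.ofReal_add (by positivity) (by positivity)]; rfl
    _ ≤ ENNReal.ofReal (‖g a - g b‖^2 + ‖g b - g c‖^2 + ‖g c - g d‖^2 + ‖g d - g a‖^2) :=
        ENNReal.ofReal_le_ofReal (obsL2Var_quadIneqH _ _ _ _)
    _ = eE g a b + (eE g b c + (eE g c d + eE g d a)) := by
        rw [ENNReal.ofReal_add (by positivity) (by positivity),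
          ENNReal.ofReal_add (by positivity) (by positivity),
          ENNReal.ofReal_add (by positivity) (by positivity)]
        simp only [eE]; ring

lemma measE {α : Type*} [MeasurableSpace α] {g : X × Y → H} (hg : StronglyMeasurable g)
    {p q : α → X × Y} (hp : Measurable p) (hq : Measurable q) :
    Measurable fun a => eE g (p a) (q a) := by
  have h : StronglyMeasurable fun a => g (p a) - g (q a) :=
    (hg.comp_measurable hp).sub (hg.comp_measurable hq)
  exact ENNReal.measurable_ofReal.comp (h.norm.measurable.pow_const 2)

lemma lint_add_mul {α : Type*} [MeasurableSpace α] (μ : Measure α) {f g : α → ℝ≥0∞}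
    (hf : Measurable f) (hg : Measurable g) :
    ∫⁻ a, (2 * f a + 2 * g a) ∂μ = 2 * ∫⁻ a, f a ∂μ + 2 * ∫⁻ a, g a ∂μ := by
  rw [lintegral_add_left (hf.const_mul 2), lintegral_const_mul 2 hf, lintegral_const_mul 2 hg]

lemma lintegral_prod4 (μX : Measure X) (μY : Measure Y) [SFinite μX] [SFinite μY]
    (F : (X × Y) × (X × Y) → ℝ≥0∞) (hF : Measurable F) :
    ∫⁻ ω, F ω ∂((μX.prod μY).prod (μX.prod μY)) =
      ∫⁻ x, ∫⁻ y, ∫⁻ x', ∫⁻ y', F ((x,y),(x',y')) ∂μY ∂μX ∂μY ∂μX := by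
  rw [lintegral_prod _ hF.aemeasurable,
    lintegral_prod _ hF.lintegral_prod_right'.aemeasurable]
  exact lintegral_congr fun x => lintegral_congr fun y =>
    lintegral_prod _ ((hF.comp measurable_prodMk_left).aemeasurable)

variable (μX : Measure X) (μY : Measure Y)
  [IsProbabilityMeasure μX] [IsProbabilityMeasure μY]
  {g : X × Y → H}
lemma P_le (hg : StronglyMeasurable g) :
    (∫⁻ x, ∫⁻ y, ∫⁻ y', eE g (x,y) (x,y') ∂μY ∂μY ∂μX)
      ≤ 4 * ∫⁻ x, ∫⁻ y, ∫⁻ x', ∫⁻ y', eE g (x,y) (x',y') ∂μY ∂μX ∂μY ∂μX := by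
  -- measurability helpers
  have mA : ∀ x : X, Measurable fun y : Y => ∫⁻ u, ∫⁻ v, eE g (x,y) (u,v) ∂μY ∂μX := by
    intro x
    exact (measE hg (show Measurable fun s : (Y × X) × Y => ((x, s.1.1) : X × Y) by fun_prop)
      (show Measurable fun s : (Y × X) × Y => ((s.1.2, s.2) : X × Y) by fun_prop)
        ).lintegral_prod_right'.lintegral_prod_right'
  have mB : ∀ x : X, Measurable fun y' : Y => ∫⁻ u, ∫⁻ v, eE g (u,v) (x,y') ∂μY ∂μX := by
    intro x
    exact (measE hg (show Measurable fun s : (Y × X) × Y => ((s.1.2, s.2) : X × Y) by fun_prop)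
      (show Measurable fun s : (Y × X) × Y => ((x, s.1.1) : X × Y) by fun_prop)
        ).lintegral_prod_right'.lintegral_prod_right'
  have mD : Measurable fun x : X => ∫⁻ y, ∫⁻ u, ∫⁻ v, eE g (x,y) (u,v) ∂μY ∂μX ∂μY := by
    exact (measE hg (show Measurable fun s : ((X × Y) × X) × Y => ((s.1.1.1, s.1.1.2) : X × Y) by fun_prop)
      (show Measurable fun s : ((X × Y) × X) × Y => ((s.1.2, s.2) : X × Y) by fun_prop)
        ).lintegral_prod_right'.lintegral_prod_right'.lintegral_prod_right'
  have mC : Measurable fun x : X => ∫⁻ y', ∫⁻ u, ∫⁻ v, eE g (u,v) (x,y') ∂μY ∂μX ∂μY := by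
    exact (measE hg (show Measurable fun s : ((X × Y) × X) × Y => ((s.1.2, s.2) : X × Y) by fun_prop)
      (show Measurable fun s : ((X × Y) × X) × Y => ((s.1.1.1, s.1.1.2) : X × Y) by fun_prop)
        ).lintegral_prod_right'.lintegral_prod_right'.lintegral_prod_right'
  calc (∫⁻ x, ∫⁻ y, ∫⁻ y', eE g (x,y) (x,y') ∂μY ∂μY ∂μX)
      ≤ ∫⁻ x, ∫⁻ y, ∫⁻ y',
          (2 * (∫⁻ u, ∫⁻ v, eE g (x,y) (u,v) ∂μY ∂μX)
            + 2 * (∫⁻ u, ∫⁻ v, eE g (u,v) (x,y') ∂μY ∂μX)) ∂μY ∂μY ∂μX := by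
        refine lintegral_mono fun x => lintegral_mono fun y => lintegral_mono fun y' => ?_
        calc eE g (x,y) (x,y')
            = ∫⁻ u, ∫⁻ v, eE g (x,y) (x,y') ∂μY ∂μX := by simp [lintegral_const]
          _ ≤ ∫⁻ u, ∫⁻ v, (2 * eE g (x,y) (u,v) + 2 * eE g (u,v) (x,y')) ∂μY ∂μX :=
              lintegral_mono fun u => lintegral_mono fun v => eE_tri g _ _ _
          _ = _ := by
              rw [show (fun u => ∫⁻ v, (2 * eE g (x,y) (u,v) + 2 * eE g (u,v) (x,y')) ∂μY)
                  = fun u => (2 * ∫⁻ v, eE g (x,y) (u,v) ∂μY + 2 * ∫⁻ v, eE g (u,v) (x,y') ∂μY) from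
                funext fun u => lint_add_mul μY (measE hg measurable_const (by fun_prop))
                  (measE hg (by fun_prop) measurable_const)]
              exact lint_add_mul μX
                ((measE hg measurable_const (by fun_prop :
                    Measurable fun s : X × Y => ((s.1, s.2) : X × Y))).lintegral_prod_right')
                ((measE hg (by fun_prop : Measurable fun s : X × Y => ((s.1, s.2) : X × Y))
                    measurable_const).lintegral_prod_right')
    _ = ∫⁻ x, ∫⁻ y,
          (2 * (∫⁻ u, ∫⁻ v, eE g (x,y) (u,v) ∂μY ∂μX)
            + 2 * (∫⁻ y', ∫⁻ u, ∫⁻ v, eE g (u,v) (x,y') ∂μY ∂μX ∂μY)) ∂μY ∂μX := by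
        refine lintegral_congr fun x => lintegral_congr fun y => ?_
        rw [lint_add_mul μY measurable_const (mB x), lintegral_const, measure_univ, mul_one]
    _ = ∫⁻ x,
          (2 * (∫⁻ y, ∫⁻ u, ∫⁻ v, eE g (x,y) (u,v) ∂μY ∂μX ∂μY)
            + 2 * (∫⁻ y', ∫⁻ u, ∫⁻ v, eE g (u,v) (x,y') ∂μY ∂μX ∂μY)) ∂μX := by
        refine lintegral_congr fun x => ?_
        rw [lint_add_mul μY (mA x) measurable_const, lintegral_const, measure_univ, mul_one]
    _ = 2 * (∫⁻ x, ∫⁻ y, ∫⁻ u, ∫⁻ v, eE g (x,y) (u,v) ∂μY ∂μX ∂μY ∂μX)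
          + 2 * (∫⁻ x, ∫⁻ y', ∫⁻ u, ∫⁻ v, eE g (u,v) (x,y') ∂μY ∂μX ∂μY ∂μX) :=
        lint_add_mul μX mD mC
    _ = 4 * ∫⁻ x, ∫⁻ y, ∫⁻ x', ∫⁻ y', eE g (x,y) (x',y') ∂μY ∂μX ∂μY ∂μX := by
        have h2 : (∫⁻ x, ∫⁻ y', ∫⁻ u, ∫⁻ v, eE g (u,v) (x,y') ∂μY ∂μX ∂μY ∂μX)
            = ∫⁻ x, ∫⁻ y, ∫⁻ x', ∫⁻ y', eE g (x,y) (x',y') ∂μY ∂μX ∂μY ∂μX := by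
          refine lintegral_congr fun x => lintegral_congr fun y => lintegral_congr fun u =>
            lintegral_congr fun v => ?_
          exact eE_symm g _ _
        rw [h2]
        ring


lemma Q_le (hg : StronglyMeasurable g) :
    (∫⁻ y, ∫⁻ x, ∫⁻ x', eE g (x,y) (x',y) ∂μX ∂μX ∂μY)
      ≤ 4 * ∫⁻ x, ∫⁻ y, ∫⁻ x', ∫⁻ y', eE g (x,y) (x',y') ∂μY ∂μX ∂μY ∂μX := by
  have mA : ∀ y : Y, Measurable fun x : X => ∫⁻ u, ∫⁻ v, eE g (x,y) (u,v) ∂μY ∂μX := by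
    intro y
    exact (measE hg (show Measurable fun s : (X × X) × Y => ((s.1.1, y) : X × Y) by fun_prop)
      (show Measurable fun s : (X × X) × Y => ((s.1.2, s.2) : X × Y) by fun_prop)
        ).lintegral_prod_right'.lintegral_prod_right'
  have mB : ∀ y : Y, Measurable fun x' : X => ∫⁻ u, ∫⁻ v, eE g (u,v) (x',y) ∂μY ∂μX := by
    intro y
    exact (measE hg (show Measurable fun s : (X × X) × Y => ((s.1.2, s.2) : X × Y) by fun_prop)
      (show Measurable fun s : (X × X) × Y => ((s.1.1, y) : X × Y) by fun_prop)
        ).lintegral_prod_right'.lintegral_prod_right'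
  have mD : Measurable fun p : Y × X => ∫⁻ u, ∫⁻ v, eE g (p.2,p.1) (u,v) ∂μY ∂μX :=
    (measE hg (show Measurable fun s : ((Y × X) × X) × Y => ((s.1.1.2, s.1.1.1) : X × Y) by fun_prop)
      (show Measurable fun s : ((Y × X) × X) × Y => ((s.1.2, s.2) : X × Y) by fun_prop)
        ).lintegral_prod_right'.lintegral_prod_right'
  have mDy : Measurable fun y : Y => ∫⁻ x, ∫⁻ u, ∫⁻ v, eE g (x,y) (u,v) ∂μY ∂μX ∂μX :=
    (measE hg (show Measurable fun s : ((Y × X) × X) × Y => ((s.1.1.2, s.1.1.1) : X × Y) by fun_prop)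
      (show Measurable fun s : ((Y × X) × X) × Y => ((s.1.2, s.2) : X × Y) by fun_prop)
        ).lintegral_prod_right'.lintegral_prod_right'.lintegral_prod_right'
  have mCy : Measurable fun y : Y => ∫⁻ x', ∫⁻ u, ∫⁻ v, eE g (u,v) (x',y) ∂μY ∂μX ∂μX :=
    (measE hg (show Measurable fun s : ((Y × X) × X) × Y => ((s.1.2, s.2) : X × Y) by fun_prop)
      (show Measurable fun s : ((Y × X) × X) × Y => ((s.1.1.2, s.1.1.1) : X × Y) by fun_prop)
        ).lintegral_prod_right'.lintegral_prod_right'.lintegral_prod_right'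
  calc (∫⁻ y, ∫⁻ x, ∫⁻ x', eE g (x,y) (x',y) ∂μX ∂μX ∂μY)
      ≤ ∫⁻ y, ∫⁻ x, ∫⁻ x',
          (2 * (∫⁻ u, ∫⁻ v, eE g (x,y) (u,v) ∂μY ∂μX)
            + 2 * (∫⁻ u, ∫⁻ v, eE g (u,v) (x',y) ∂μY ∂μX)) ∂μX ∂μX ∂μY := by
        refine lintegral_mono fun y => lintegral_mono fun x => lintegral_mono fun x' => ?_
        calc eE g (x,y) (x',y)
            = ∫⁻ u, ∫⁻ v, eE g (x,y) (x',y) ∂μY ∂μX := by simp [lintegral_const]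
          _ ≤ ∫⁻ u, ∫⁻ v, (2 * eE g (x,y) (u,v) + 2 * eE g (u,v) (x',y)) ∂μY ∂μX :=
              lintegral_mono fun u => lintegral_mono fun v => eE_tri g _ _ _
          _ = _ := by
              rw [show (fun u => ∫⁻ v, (2 * eE g (x,y) (u,v) + 2 * eE g (u,v) (x',y)) ∂μY)
                  = fun u => (2 * ∫⁻ v, eE g (x,y) (u,v) ∂μY + 2 * ∫⁻ v, eE g (u,v) (x',y) ∂μY) from
                funext fun u => lint_add_mul μY (measE hg measurable_const (by fun_prop))
                  (measE hg (by fun_prop) measurable_const)]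
              exact lint_add_mul μX
                ((measE hg measurable_const (by fun_prop :
                    Measurable fun s : X × Y => ((s.1, s.2) : X × Y))).lintegral_prod_right')
                ((measE hg (by fun_prop : Measurable fun s : X × Y => ((s.1, s.2) : X × Y))
                    measurable_const).lintegral_prod_right')
    _ = ∫⁻ y, ∫⁻ x,
          (2 * (∫⁻ u, ∫⁻ v, eE g (x,y) (u,v) ∂μY ∂μX)
            + 2 * (∫⁻ x', ∫⁻ u, ∫⁻ v, eE g (u,v) (x',y) ∂μY ∂μX ∂μX)) ∂μX ∂μY := by
        refine lintegral_congr fun y => lintegral_congr fun x => ?_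
        rw [lint_add_mul μX measurable_const (mB y), lintegral_const, measure_univ, mul_one]
    _ = ∫⁻ y,
          (2 * (∫⁻ x, ∫⁻ u, ∫⁻ v, eE g (x,y) (u,v) ∂μY ∂μX ∂μX)
            + 2 * (∫⁻ x', ∫⁻ u, ∫⁻ v, eE g (u,v) (x',y) ∂μY ∂μX ∂μX)) ∂μY := by
        refine lintegral_congr fun y => ?_
        rw [lint_add_mul μX (mA y) measurable_const, lintegral_const, measure_univ, mul_one]
    _ = 2 * (∫⁻ y, ∫⁻ x, ∫⁻ u, ∫⁻ v, eE g (x,y) (u,v) ∂μY ∂μX ∂μX ∂μY)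
          + 2 * (∫⁻ y, ∫⁻ x', ∫⁻ u, ∫⁻ v, eE g (u,v) (x',y) ∂μY ∂μX ∂μX ∂μY) :=
        lint_add_mul μY mDy mCy
    _ = 4 * ∫⁻ x, ∫⁻ y, ∫⁻ x', ∫⁻ y', eE g (x,y) (x',y') ∂μY ∂μX ∂μY ∂μX := by
        have h1 : (∫⁻ y, ∫⁻ x, ∫⁻ u, ∫⁻ v, eE g (x,y) (u,v) ∂μY ∂μX ∂μX ∂μY)
            = ∫⁻ x, ∫⁻ y, ∫⁻ u, ∫⁻ v, eE g (x,y) (u,v) ∂μY ∂μX ∂μY ∂μX :=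
          lintegral_lintegral_swap mD.aemeasurable
        have h2 : (∫⁻ y, ∫⁻ x', ∫⁻ u, ∫⁻ v, eE g (u,v) (x',y) ∂μY ∂μX ∂μX ∂μY)
            = ∫⁻ x, ∫⁻ y, ∫⁻ u, ∫⁻ v, eE g (x,y) (u,v) ∂μY ∂μX ∂μY ∂μX := by
          have h2a : (∫⁻ y, ∫⁻ x', ∫⁻ u, ∫⁻ v, eE g (u,v) (x',y) ∂μY ∂μX ∂μX ∂μY)
              = ∫⁻ y, ∫⁻ x', ∫⁻ u, ∫⁻ v, eE g (x',y) (u,v) ∂μY ∂μX ∂μX ∂μY :=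
            lintegral_congr fun y => lintegral_congr fun x' => lintegral_congr fun u =>
              lintegral_congr fun v => eE_symm g _ _
          rw [h2a]
          exact lintegral_lintegral_swap mD.aemeasurable
        rw [h1, h2]; ring


lemma db_eq (hg : StronglyMeasurable g) :
    (∫⁻ x, ∫⁻ y, ∫⁻ x', ∫⁻ y', eE g (x,y') (x',y) ∂μY ∂μX ∂μY ∂μX)
      = ∫⁻ x, ∫⁻ y, ∫⁻ x', ∫⁻ y', eE g (x,y) (x',y') ∂μY ∂μX ∂μY ∂μX := by
  calc (∫⁻ x, ∫⁻ y, ∫⁻ x', ∫⁻ y', eE g (x,y') (x',y) ∂μY ∂μX ∂μY ∂μX)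
      = ∫⁻ x, ∫⁻ y, ∫⁻ y', ∫⁻ x', eE g (x,y') (x',y) ∂μX ∂μY ∂μY ∂μX := by
        refine lintegral_congr fun x => lintegral_congr fun y => ?_
        exact lintegral_lintegral_swap
          ((measE hg (show Measurable fun s : X × Y => ((x, s.2) : X × Y) by fun_prop)
            (show Measurable fun s : X × Y => ((s.1, y) : X × Y) by fun_prop)).aemeasurable)
    _ = ∫⁻ x, ∫⁻ y, ∫⁻ y', ∫⁻ x', eE g (x,y) (x',y') ∂μX ∂μY ∂μY ∂μX := by
        refine lintegral_congr fun x => ?_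
        exact lintegral_lintegral_swap
          (((measE hg (show Measurable fun s : (Y × Y) × X => ((x, s.1.2) : X × Y) by fun_prop)
            (show Measurable fun s : (Y × Y) × X => ((s.2, s.1.1) : X × Y) by fun_prop)
              ).lintegral_prod_right').aemeasurable)
    _ = ∫⁻ x, ∫⁻ y, ∫⁻ x', ∫⁻ y', eE g (x,y) (x',y') ∂μY ∂μX ∂μY ∂μX := by
        refine lintegral_congr fun x => lintegral_congr fun y => ?_
        exact lintegral_lintegral_swap
          ((measE hg (show Measurable fun s : Y × X => ((x, y) : X × Y) by fun_prop)
            (show Measurable fun s : Y × X => ((s.2, s.1) : X × Y) by fun_prop)).aemeasurable)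

lemma ab_eq (hg : StronglyMeasurable g) :
    (∫⁻ x, ∫⁻ y, ∫⁻ x', ∫⁻ y', eE g (x,y) (x',y) ∂μY ∂μX ∂μY ∂μX)
      = ∫⁻ y, ∫⁻ x, ∫⁻ x', eE g (x,y) (x',y) ∂μX ∂μX ∂μY := by
  calc (∫⁻ x, ∫⁻ y, ∫⁻ x', ∫⁻ y', eE g (x,y) (x',y) ∂μY ∂μX ∂μY ∂μX)
      = ∫⁻ x, ∫⁻ y, ∫⁻ x', eE g (x,y) (x',y) ∂μX ∂μY ∂μX := by
        refine lintegral_congr fun x => lintegral_congr fun y => lintegral_congr fun x' => ?_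
        simp [lintegral_const]
    _ = ∫⁻ y, ∫⁻ x, ∫⁻ x', eE g (x,y) (x',y) ∂μX ∂μX ∂μY :=
        lintegral_lintegral_swap
          (((measE hg (show Measurable fun s : (X × Y) × X => ((s.1.1, s.1.2) : X × Y) by fun_prop)
            (show Measurable fun s : (X × Y) × X => ((s.2, s.1.2) : X × Y) by fun_prop)
              ).lintegral_prod_right').aemeasurable)

lemma bc_eq (hg : StronglyMeasurable g) :
    (∫⁻ x, ∫⁻ y, ∫⁻ x', ∫⁻ y', eE g (x',y) (x',y') ∂μY ∂μX ∂μY ∂μX)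
      = ∫⁻ x, ∫⁻ y, ∫⁻ y', eE g (x,y) (x,y') ∂μY ∂μY ∂μX := by
  calc (∫⁻ x, ∫⁻ y, ∫⁻ x', ∫⁻ y', eE g (x',y) (x',y') ∂μY ∂μX ∂μY ∂μX)
      = ∫⁻ y, ∫⁻ x', ∫⁻ y', eE g (x',y) (x',y') ∂μY ∂μX ∂μY := by
        simp [lintegral_const]
    _ = ∫⁻ x, ∫⁻ y, ∫⁻ y', eE g (x,y) (x,y') ∂μY ∂μY ∂μX :=
        lintegral_lintegral_swap
          (((measE hg (show Measurable fun s : (Y × X) × Y => ((s.1.2, s.1.1) : X × Y) by fun_prop)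
            (show Measurable fun s : (Y × X) × Y => ((s.1.2, s.2) : X × Y) by fun_prop)
              ).lintegral_prod_right').aemeasurable)

lemma cd_eq (hg : StronglyMeasurable g) :
    (∫⁻ x, ∫⁻ y, ∫⁻ x', ∫⁻ y', eE g (x',y') (x,y') ∂μY ∂μX ∂μY ∂μX)
      = ∫⁻ y, ∫⁻ x, ∫⁻ x', eE g (x,y) (x',y) ∂μX ∂μX ∂μY := by
  calc (∫⁻ x, ∫⁻ y, ∫⁻ x', ∫⁻ y', eE g (x',y') (x,y') ∂μY ∂μX ∂μY ∂μX)
      = ∫⁻ x, ∫⁻ x', ∫⁻ y', eE g (x,y') (x',y') ∂μY ∂μX ∂μX := by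
        refine lintegral_congr fun x => ?_
        rw [lintegral_const, measure_univ, mul_one]
        exact lintegral_congr fun x' => lintegral_congr fun y' => eE_symm g _ _
    _ = ∫⁻ x, ∫⁻ y', ∫⁻ x', eE g (x,y') (x',y') ∂μX ∂μY ∂μX := by
        refine lintegral_congr fun x => ?_
        exact lintegral_lintegral_swap
          ((measE hg (show Measurable fun s : X × Y => ((x, s.2) : X × Y) by fun_prop)
            (show Measurable fun s : X × Y => ((s.1, s.2) : X × Y) by fun_prop)).aemeasurable)
    _ = ∫⁻ y, ∫⁻ x, ∫⁻ x', eE g (x,y) (x',y) ∂μX ∂μX ∂μY :=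
        lintegral_lintegral_swap
          (((measE hg (show Measurable fun s : (X × Y) × X => ((s.1.1, s.1.2) : X × Y) by fun_prop)
            (show Measurable fun s : (X × Y) × X => ((s.2, s.1.2) : X × Y) by fun_prop)
              ).lintegral_prod_right').aemeasurable)

lemma da_eq :
    (∫⁻ x, ∫⁻ y, ∫⁻ x', ∫⁻ y', eE g (x,y') (x,y) ∂μY ∂μX ∂μY ∂μX)
      = ∫⁻ x, ∫⁻ y, ∫⁻ y', eE g (x,y) (x,y') ∂μY ∂μY ∂μX := by
  refine lintegral_congr fun x => lintegral_congr fun y => ?_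
  rw [lintegral_const, measure_univ, mul_one]
  exact lintegral_congr fun y' => eE_symm g _ _

lemma main_ineq [InnerProductSpace ℝ H] (hg : StronglyMeasurable g) :
    (∫⁻ x, ∫⁻ y, ∫⁻ x', ∫⁻ y', eE g (x,y) (x',y') ∂μY ∂μX ∂μY ∂μX)
      + (∫⁻ x, ∫⁻ y, ∫⁻ x', ∫⁻ y', eE g (x,y) (x',y') ∂μY ∂μX ∂μY ∂μX)
    ≤ ((∫⁻ y, ∫⁻ x, ∫⁻ x', eE g (x,y) (x',y) ∂μX ∂μX ∂μY)
        + (∫⁻ x, ∫⁻ y, ∫⁻ y', eE g (x,y) (x,y') ∂μY ∂μY ∂μX))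
      + ((∫⁻ y, ∫⁻ x, ∫⁻ x', eE g (x,y) (x',y) ∂μX ∂μX ∂μY)
        + (∫⁻ x, ∫⁻ y, ∫⁻ y', eE g (x,y) (x,y') ∂μY ∂μY ∂μX)) := by
  set π := (μX.prod μY).prod (μX.prod μY) with hπ
  have mac : Measurable fun ω : (X × Y) × (X × Y) => eE g ω.1 ω.2 :=
    measE hg measurable_fst measurable_snd
  have mdb : Measurable fun ω : (X × Y) × (X × Y) => eE g (ω.1.1, ω.2.2) (ω.2.1, ω.1.2) :=
    measE hg (by fun_prop) (by fun_prop)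
  have mab : Measurable fun ω : (X × Y) × (X × Y) => eE g ω.1 (ω.2.1, ω.1.2) :=
    measE hg measurable_fst (by fun_prop)
  have mbc : Measurable fun ω : (X × Y) × (X × Y) => eE g (ω.2.1, ω.1.2) ω.2 :=
    measE hg (by fun_prop) measurable_snd
  have mcd : Measurable fun ω : (X × Y) × (X × Y) => eE g ω.2 (ω.1.1, ω.2.2) :=
    measE hg measurable_snd (by fun_prop)
  have mda : Measurable fun ω : (X × Y) × (X × Y) => eE g (ω.1.1, ω.2.2) ω.1 :=
    measE hg (by fun_prop) measurable_fst
  have key : (∫⁻ ω, eE g ω.1 ω.2 ∂π) + ∫⁻ ω, eE g (ω.1.1, ω.2.2) (ω.2.1, ω.1.2) ∂π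
      ≤ (∫⁻ ω, eE g ω.1 (ω.2.1, ω.1.2) ∂π)
        + ((∫⁻ ω, eE g (ω.2.1, ω.1.2) ω.2 ∂π)
          + ((∫⁻ ω, eE g ω.2 (ω.1.1, ω.2.2) ∂π) + ∫⁻ ω, eE g (ω.1.1, ω.2.2) ω.1 ∂π)) := by
    rw [← lintegral_add_left mac, ← lintegral_add_left mcd, ← lintegral_add_left mbc,
      ← lintegral_add_left mab]
    exact lintegral_mono fun ω => eE_quad g ω.1 (ω.2.1, ω.1.2) ω.2 (ω.1.1, ω.2.2)
  rw [lintegral_prod4 μX μY _ mac, lintegral_prod4 μX μY _ mdb, lintegral_prod4 μX μY _ mab,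
    lintegral_prod4 μX μY _ mbc, lintegral_prod4 μX μY _ mcd, lintegral_prod4 μX μY _ mda]
    at key
  simp only at key
  rw [db_eq μX μY hg, ab_eq μX μY hg, bc_eq μX μY hg, cd_eq μX μY hg, da_eq μX μY] at key
  calc _ ≤ _ := key
  _ = _ := by ring


end ObsL2VarHelpers

/-- Sharper product inequality for the `L²`-variation of maps into a Hilbert space:
`V₂(f)² ≤ ∫_X V₂(f^x)² dμ_X + ∫_Y V₂(f^y)² dμ_Y`. -/
theorem obsL2Var_product_inequality_hilbert
    {X Y H : Type*} [MeasurableSpace X] [MeasurableSpace Y]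
    [NormedAddCommGroup H] [InnerProductSpace ℝ H]
    (μX : Measure X) (μY : Measure Y)
    [IsProbabilityMeasure μX] [IsProbabilityMeasure μY]
    (f : X × Y → H)
    (hmeas : AEStronglyMeasurable f (μX.prod μY))
    (hint : Integrable (fun q : (X × Y) × (X × Y) => ‖f q.1 - f q.2‖ ^ 2)
      ((μX.prod μY).prod (μX.prod μY))) :
    ∫ w, ∫ w', ‖f w - f w'‖ ^ 2 ∂(μX.prod μY) ∂(μX.prod μY) ≤
      (∫ x, ∫ y, ∫ y', ‖f (x, y) - f (x, y')‖ ^ 2 ∂μY ∂μY ∂μX) +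
      ∫ y, ∫ x, ∫ x', ‖f (x, y) - f (x', y)‖ ^ 2 ∂μX ∂μX ∂μY := by
  set ν := μX.prod μY with hν
  set π := ν.prod ν with hπ
  set g : X × Y → H := hmeas.mk f with hgdef
  have hg : StronglyMeasurable g := hmeas.stronglyMeasurable_mk
  have hfg : f =ᵐ[ν] g := hmeas.ae_eq_mk
  set L4 := ∫⁻ x, ∫⁻ y, ∫⁻ x', ∫⁻ y', eE g (x,y) (x',y') ∂μY ∂μX ∂μY ∂μX with hL4def
  set P := ∫⁻ x, ∫⁻ y, ∫⁻ y', eE g (x,y) (x,y') ∂μY ∂μY ∂μX with hPdef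
  set Q := ∫⁻ y, ∫⁻ x, ∫⁻ x', eE g (x,y) (x',y) ∂μX ∂μX ∂μY with hQdef
  have mac : Measurable fun ω : (X × Y) × (X × Y) => eE g ω.1 ω.2 :=
    measE hg measurable_fst measurable_snd
  -- the ae identification of f and g on the big product
  have h1 : (fun ω : (X × Y) × (X × Y) => f ω.1) =ᵐ[π] fun ω => g ω.1 :=
    Measure.quasiMeasurePreserving_fst.ae_eq_comp hfg
  have h2 : (fun ω : (X × Y) × (X × Y) => f ω.2) =ᵐ[π] fun ω => g ω.2 :=
    Measure.quasiMeasurePreserving_snd.ae_eq_comp hfg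
  -- L4 as a lintegral over π and its finiteness
  have hL4π : L4 = ∫⁻ ω, eE g ω.1 ω.2 ∂π := (lintegral_prod4 μX μY _ mac).symm
  have hL4fin : L4 ≠ ∞ := by
    rw [hL4π]
    have hcongr : ∫⁻ ω, eE g ω.1 ω.2 ∂π
        = ∫⁻ ω : (X × Y) × (X × Y), ENNReal.ofReal (‖f ω.1 - f ω.2‖^2) ∂π := by
      refine lintegral_congr_ae ?_
      filter_upwards [h1, h2] with ω e1 e2
      simp only [eE, e1, e2]
    rw [hcongr]
    have hle : ∀ ω : (X × Y) × (X × Y),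
        ENNReal.ofReal (‖f ω.1 - f ω.2‖^2) ≤ (‖(‖f ω.1 - f ω.2‖^2 : ℝ)‖₊ : ℝ≥0∞) := by
      intro ω
      rw [← enorm_eq_nnnorm, Real.enorm_eq_ofReal (by positivity)]
    exact (lt_of_le_of_lt (lintegral_mono hle) hint.2).ne
  -- LHS = L4.toReal
  have hLHS : ∫ w, ∫ w', ‖f w - f w'‖ ^ 2 ∂ν ∂ν = L4.toReal := by
    have e1 : ∫ w, ∫ w', ‖f w - f w'‖ ^ 2 ∂ν ∂ν
        = ∫ z : (X × Y) × (X × Y), ‖f z.1 - f z.2‖ ^ 2 ∂π :=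
      integral_integral (f := fun w w' => ‖f w - f w'‖ ^ 2) hint
    rw [e1, integral_eq_lintegral_of_nonneg_ae (ae_of_all _ fun q => by positivity) hint.1,
      hL4π]
    congr 1
    refine lintegral_congr_ae ?_
    filter_upwards [h1, h2] with ω e1 e2
    simp only [eE, e1, e2]
  -- finiteness of P and Q
  have hPfin : P ≠ ∞ :=
    (lt_of_le_of_lt (P_le μX μY hg) (ENNReal.mul_lt_top (by norm_num) hL4fin.lt_top)).ne
  have hQfin : Q ≠ ∞ :=
    (lt_of_le_of_lt (Q_le μX μY hg) (ENNReal.mul_lt_top (by norm_num) hL4fin.lt_top)).ne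
  -- RHS first term equals P.toReal
  have haeXY : ∀ᵐ x ∂μX, ∀ᵐ y ∂μY, f (x,y) = g (x,y) := Measure.ae_ae_of_ae_prod hfg
  have mPin : ∀ x : X, Measurable fun y : Y => ∫⁻ y', eE g (x,y) (x,y') ∂μY := fun x =>
    (measE hg (show Measurable fun s : Y × Y => ((x, s.1) : X × Y) by fun_prop)
      (show Measurable fun s : Y × Y => ((x, s.2) : X × Y) by fun_prop)).lintegral_prod_right'
  have mPout : Measurable fun x : X => ∫⁻ y, ∫⁻ y', eE g (x,y) (x,y') ∂μY ∂μY :=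
    (measE hg (show Measurable fun s : (X × Y) × Y => ((s.1.1, s.1.2) : X × Y) by fun_prop)
      (show Measurable fun s : (X × Y) × Y => ((s.1.1, s.2) : X × Y) by fun_prop)
        ).lintegral_prod_right'.lintegral_prod_right'
  have hxPfin : ∀ᵐ x ∂μX, (∫⁻ y, ∫⁻ y', eE g (x,y) (x,y') ∂μY ∂μY) < ∞ :=
    ae_lt_top mPout hPfin
  have hRHS1 : (∫ x, ∫ y, ∫ y', ‖f (x, y) - f (x, y')‖ ^ 2 ∂μY ∂μY ∂μX) = P.toReal := by
    rw [hPdef, ← integral_toReal mPout.aemeasurable hxPfin]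
    refine integral_congr_ae ?_
    filter_upwards [haeXY, hxPfin] with x hx hfin
    have hyfin : ∀ᵐ y ∂μY, (∫⁻ y', eE g (x,y) (x,y') ∂μY) < ∞ := ae_lt_top (mPin x) hfin.ne
    rw [← integral_toReal (mPin x).aemeasurable hyfin]
    refine integral_congr_ae ?_
    filter_upwards [hx] with y hy
    have inner1 : ∫ y', ‖f (x, y) - f (x, y')‖ ^ 2 ∂μY = ∫ y', ‖g (x, y) - g (x, y')‖ ^ 2 ∂μY := by
      refine integral_congr_ae ?_
      filter_upwards [hx] with y' hy'
      rw [hy, hy']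
    rw [inner1]
    have sm : AEStronglyMeasurable (fun y' : Y => ‖g (x, y) - g (x, y')‖ ^ 2) μY := by
      have h : StronglyMeasurable fun y' : Y => g (x, y) - g (x, y') :=
        stronglyMeasurable_const.sub (hg.comp_measurable (by fun_prop))
      exact (h.norm.measurable.pow_const 2).aestronglyMeasurable
    rw [integral_eq_lintegral_of_nonneg_ae (ae_of_all _ fun y' => by positivity) sm]
    rfl
  -- RHS second term equals Q.toReal
  have hfg' : (fun p : Y × X => f (p.2, p.1)) =ᵐ[μY.prod μX] fun p => g (p.2, p.1) := by
    have hswap : MeasurePreserving Prod.swap (μY.prod μX) (μX.prod μY) :=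
      Measure.measurePreserving_swap
    exact hswap.quasiMeasurePreserving.ae_eq_comp hfg
  have haeYX : ∀ᵐ y ∂μY, ∀ᵐ x ∂μX, f (x,y) = g (x,y) := Measure.ae_ae_of_ae_prod hfg'
  have mQin : ∀ y : Y, Measurable fun x : X => ∫⁻ x', eE g (x,y) (x',y) ∂μX := fun y =>
    (measE hg (show Measurable fun s : X × X => ((s.1, y) : X × Y) by fun_prop)
      (show Measurable fun s : X × X => ((s.2, y) : X × Y) by fun_prop)).lintegral_prod_right'
  have mQout : Measurable fun y : Y => ∫⁻ x, ∫⁻ x', eE g (x,y) (x',y) ∂μX ∂μX :=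
    (measE hg (show Measurable fun s : (Y × X) × X => ((s.1.2, s.1.1) : X × Y) by fun_prop)
      (show Measurable fun s : (Y × X) × X => ((s.2, s.1.1) : X × Y) by fun_prop)
        ).lintegral_prod_right'.lintegral_prod_right'
  have hyQfin : ∀ᵐ y ∂μY, (∫⁻ x, ∫⁻ x', eE g (x,y) (x',y) ∂μX ∂μX) < ∞ :=
    ae_lt_top mQout hQfin
  have hRHS2 : (∫ y, ∫ x, ∫ x', ‖f (x, y) - f (x', y)‖ ^ 2 ∂μX ∂μX ∂μY) = Q.toReal := by
    rw [hQdef, ← integral_toReal mQout.aemeasurable hyQfin]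
    refine integral_congr_ae ?_
    filter_upwards [haeYX, hyQfin] with y hy hfin
    have hxfin : ∀ᵐ x ∂μX, (∫⁻ x', eE g (x,y) (x',y) ∂μX) < ∞ := ae_lt_top (mQin y) hfin.ne
    rw [← integral_toReal (mQin y).aemeasurable hxfin]
    refine integral_congr_ae ?_
    filter_upwards [hy] with x hx
    have inner1 : ∫ x', ‖f (x, y) - f (x', y)‖ ^ 2 ∂μX = ∫ x', ‖g (x, y) - g (x', y)‖ ^ 2 ∂μX := by
      refine integral_congr_ae ?_
      filter_upwards [hy] with x' hx'
      rw [hx, hx']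
    rw [inner1]
    have sm : AEStronglyMeasurable (fun x' : X => ‖g (x, y) - g (x', y)‖ ^ 2) μX := by
      have h : StronglyMeasurable fun x' : X => g (x, y) - g (x', y) :=
        stronglyMeasurable_const.sub (hg.comp_measurable (by fun_prop))
      exact (h.norm.measurable.pow_const 2).aestronglyMeasurable
    rw [integral_eq_lintegral_of_nonneg_ae (ae_of_all _ fun x' => by positivity) sm]
    rfl
  -- conclude
  have hmain : L4 + L4 ≤ (Q + P) + (Q + P) := main_ineq μX μY hg
  rw [hLHS, hRHS1, hRHS2]
  have hQPfin : (Q + P) + (Q + P) ≠ ∞ := by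
    simp [ENNReal.add_ne_top, hPfin, hQfin]
  have ht : (L4 + L4).toReal ≤ ((Q + P) + (Q + P)).toReal :=
    ENNReal.toReal_mono hQPfin hmain
  rw [ENNReal.toReal_add hL4fin hL4fin, ENNReal.toReal_add, ENNReal.toReal_add hQfin hPfin]
    at ht
  · linarith
  · simp [ENNReal.add_ne_top, hPfin, hQfin]
  · simp [ENNReal.add_ne_top, hPfin, hQfin]
end

section
/- Let T be the tripod (three rays glued at a common origin) and let {a,b} carry the uniform probability measure. Define f : {a,b}² → T by f(a,a) = (1,1) ∈ T₁, f(b,a) = (2,1) ∈ T₂, f(a,b) = f(b,b) = (3,1) ∈ T₃. Then E(f) = (0,0) (the gluing point), E(f^a) = (0,0), E(f^b) = (3,1), and E_y(E(f^y)) = (3,1/2); in particular d_T(E(f), E_y(E(f^y))) = 1/2 > 0, so the Fubini identity E(f) = E_y(E(f^y)) fails for maps into nonlinear CAT(0) spaces. -/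
/-- The tripod: three copies of `[0,∞)` glued at their origins, with canonical
representatives (the gluing point is `(0, 0)`). -/
def Tripod : Type :=
  {p : Fin 3 × ℝ // 0 ≤ p.2 ∧ (p.2 = 0 → p.1 = 0)}

/-- The intrinsic distance on the tripod: `|r − s|` within one ray, `r + s` across rays. -/
noncomputable def tdist (p q : Tripod) : ℝ :=
  if p.1.1 = q.1.1 then |p.1.2 - q.1.2| else p.1.2 + q.1.2

/-- The gluing point of the tripod. -/
def tripodOrigin : Tripod := ⟨(0, 0), le_refl 0, fun _ => rfl⟩

/-- The point `(i, 1)` on the `i`-th ray of the tripod. -/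
def tripodPt (i : Fin 3) : Tripod := ⟨(i, 1), by norm_num⟩

/-- The point `(3, 1/2)` on the third ray of the tripod. -/
noncomputable def tripodHalf : Tripod := ⟨(2, 1 / 2), by norm_num⟩

/-- The counterexample map `f : {a,b}² → T` with `f(a,a) = (1,1)`, `f(b,a) = (2,1)`,
`f(a,b) = f(b,b) = (3,1)` (here `a = false`, `b = true`, the first ray has index `0`). -/
noncomputable def cex (w : Bool × Bool) : Tripod :=
  if w.2 then tripodPt 2 else if w.1 then tripodPt 1 else tripodPt 0

lemma tdist_pt_sq (x : Tripod) (j : Fin 3) :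
    tdist x (tripodPt j) ^ 2 = if x.1.1 = j then (x.1.2 - 1)^2 else (x.1.2 + 1)^2 := by
  unfold tdist tripodPt
  split <;> simp_all [sq_abs]

lemma tdist_origin (x : Tripod) : tdist x tripodOrigin = x.1.2 := by
  unfold tdist tripodOrigin
  split <;> simp [abs_of_nonneg x.2.1]

lemma sum1 (i : Fin 3) (r : ℝ) (h) :
    ∑ w : Bool × Bool, (1 / 4 : ℝ) * tdist ⟨(i, r), h⟩ (cex w) ^ 2 =
      (1/4) * ((if i = 0 then (r-1)^2 else (r+1)^2)
        + (if i = 1 then (r-1)^2 else (r+1)^2)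
        + 2 * (if i = 2 then (r-1)^2 else (r+1)^2)) := by
  simp [Fintype.sum_prod_type, cex, tdist_pt_sq ⟨(i, r), h⟩]
  try split_ifs <;> ring

lemma sum2 (i : Fin 3) (r : ℝ) (h) :
    ∑ s : Bool, (1 / 2 : ℝ) * tdist ⟨(i, r), h⟩ (cex (s, false)) ^ 2 =
      (1/2) * ((if i = 0 then (r-1)^2 else (r+1)^2)
        + (if i = 1 then (r-1)^2 else (r+1)^2)) := by
  simp [cex, tdist_pt_sq ⟨(i, r), h⟩]
  try split_ifs <;> ring

lemma sum3 (i : Fin 3) (r : ℝ) (h) :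
    ∑ s : Bool, (1 / 2 : ℝ) * tdist ⟨(i, r), h⟩ (cex (s, true)) ^ 2 =
      (if i = 2 then (r-1)^2 else (r+1)^2) := by
  simp [cex, tdist_pt_sq ⟨(i, r), h⟩]

lemma sum4 (i : Fin 3) (r : ℝ) (h) :
    (1 / 2 : ℝ) * tdist ⟨(i, r), h⟩ tripodOrigin ^ 2
      + (1 / 2) * tdist ⟨(i, r), h⟩ (tripodPt 2) ^ 2 =
      (1/2) * (r^2 + (if i = 2 then (r-1)^2 else (r+1)^2)) := by
  rw [tdist_origin ⟨(i, r), h⟩, tdist_pt_sq ⟨(i, r), h⟩]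
  split_ifs <;> ring


/-- Failure of the Fubini identity on the tripod: for `f = cex` on `{a,b}²` with the uniform
measure, `E(f)` is the gluing point, `E(f^a)` is the gluing point, `E(f^b) = (3,1)`, the
repeated expectation `E_y(E(f^y))` is `(3,1/2)`, and `d(E(f), E_y(E(f^y))) = 1/2 > 0`.
Each expectation is characterized as the unique minimizer of the weighted sum of squared
distances to the corresponding values. -/
theorem tripod_fubini_fails :
    (∀ x : Tripod,
        (∀ y : Tripod,
            ∑ w : Bool × Bool, (1 / 4 : ℝ) * tdist x (cex w) ^ 2 ≤
              ∑ w : Bool × Bool, (1 / 4 : ℝ) * tdist y (cex w) ^ 2) ↔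
          x = tripodOrigin) ∧
    (∀ x : Tripod,
        (∀ y : Tripod,
            ∑ s : Bool, (1 / 2 : ℝ) * tdist x (cex (s, false)) ^ 2 ≤
              ∑ s : Bool, (1 / 2 : ℝ) * tdist y (cex (s, false)) ^ 2) ↔
          x = tripodOrigin) ∧
    (∀ x : Tripod,
        (∀ y : Tripod,
            ∑ s : Bool, (1 / 2 : ℝ) * tdist x (cex (s, true)) ^ 2 ≤
              ∑ s : Bool, (1 / 2 : ℝ) * tdist y (cex (s, true)) ^ 2) ↔
          x = tripodPt 2) ∧
    (∀ x : Tripod,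
        (∀ y : Tripod,
            (1 / 2 : ℝ) * tdist x tripodOrigin ^ 2 + (1 / 2) * tdist x (tripodPt 2) ^ 2 ≤
              (1 / 2 : ℝ) * tdist y tripodOrigin ^ 2 + (1 / 2) * tdist y (tripodPt 2) ^ 2) ↔
          x = tripodHalf) ∧
    tdist tripodOrigin tripodHalf = 1 / 2 ∧ (0 : ℝ) < 1 / 2 := by
  refine ⟨?_, ?_, ?_, ?_, ?_, by norm_num⟩
  · intro x
    constructor
    · intro h
      have h1 := h tripodOrigin
      obtain ⟨⟨i, r⟩, hr, h0⟩ := x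
      unfold tripodOrigin at h1
      rw [sum1, sum1] at h1
      simp only [] at hr h0
      fin_cases i <;> norm_num [Fin.ext_iff] at h1 h0 ⊢
      · have : r = 0 := by nlinarith
        subst this; rfl
      · exact absurd (by nlinarith : r = 0) h0
      · exact absurd (by nlinarith : r = 0) h0
    · rintro rfl ⟨⟨j, s⟩, hs, hs0⟩
      unfold tripodOrigin
      rw [sum1, sum1]
      simp only [] at hs
      fin_cases j <;> norm_num [Fin.ext_iff] <;> nlinarith
  · intro x
    constructor
    · intro h
      have h1 := h tripodOrigin
      obtain ⟨⟨i, r⟩, hr, h0⟩ := x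
      unfold tripodOrigin at h1
      rw [sum2, sum2] at h1
      simp only [] at hr h0
      fin_cases i <;> norm_num [Fin.ext_iff] at h1 h0 ⊢
      · have : r = 0 := by nlinarith
        subst this; rfl
      · exact absurd (by nlinarith : r = 0) h0
      · exact absurd (by nlinarith : r = 0) h0
    · rintro rfl ⟨⟨j, s⟩, hs, hs0⟩
      unfold tripodOrigin
      rw [sum2, sum2]
      simp only [] at hs
      fin_cases j <;> norm_num [Fin.ext_iff] <;> nlinarith
  · intro x
    constructor
    · intro h
      have h1 := h (tripodPt 2)
      obtain ⟨⟨i, r⟩, hr, h0⟩ := x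
      unfold tripodPt at h1
      rw [sum3, sum3] at h1
      simp only [] at hr h0
      fin_cases i <;> norm_num [Fin.ext_iff] at h1 h0 ⊢
      · nlinarith
      · nlinarith
      · have : r = 1 := by nlinarith
        subst this; rfl
    · rintro rfl ⟨⟨j, s⟩, hs, hs0⟩
      unfold tripodPt
      rw [sum3, sum3]
      simp only [] at hs
      fin_cases j <;> norm_num [Fin.ext_iff] <;> nlinarith
  · intro x
    constructor
    · intro h
      have h1 := h tripodHalf
      obtain ⟨⟨i, r⟩, hr, h0⟩ := x
      unfold tripodHalf at h1
      rw [sum4, sum4] at h1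
      simp only [] at hr h0
      fin_cases i <;> norm_num [Fin.ext_iff] at h1 h0 ⊢
      · nlinarith
      · nlinarith
      · have : r = 1/2 := by nlinarith
        subst this; rfl
    · rintro rfl ⟨⟨j, s⟩, hs, hs0⟩
      unfold tripodHalf
      rw [sum4, sum4]
      simp only [] at hs
      fin_cases j <;> norm_num [Fin.ext_iff] <;> nlinarith [sq_nonneg (2*s-1)]
  · unfold tdist tripodOrigin tripodHalf
    norm_num [Fin.ext_iff]
end
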